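/- Let p ≥ 2, T > 0, A : [0,T] × T^2 → R^2, G : [0,T] × T^2 → C, φ : [0,T] × T^2 → C smooth with (∂_t − D_A^j D_{A,j}) φ = G, and K a smooth solution of (∂_t + Δ)K = 0. Then ∂_t(K |φ|^p / p) = −(ΔK)|φ|^p/p + K Δ(|φ|^p/p) − K( ((p−2)/4) | |φ|^{(p−4)/2} ∇(|φ|^2) |^2 + |φ|^{p−2} |D_A φ|^2 − |φ|^{p−2} Re(conj(φ) G) ), at points where φ ≠ 0. -/

import Mathlib

noncomputable section

variable {F : Type*} [NormedAddCommGroup F] [NormedSpace ℝ F]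

/-- Spatial partial derivative `∂_j` on space-time `ℝ × ℝ²`. -/
def pd (j : Fin 2) (f : ℝ × EuclideanSpace ℝ (Fin 2) → F) :
    ℝ × EuclideanSpace ℝ (Fin 2) → F :=
  fun z => fderiv ℝ f z (0, EuclideanSpace.single j 1)

/-- Time derivative `∂_t` on space-time. -/
def td (f : ℝ × EuclideanSpace ℝ (Fin 2) → F) :
    ℝ × EuclideanSpace ℝ (Fin 2) → F :=
  fun z => fderiv ℝ f z (1, 0)

/-- Spatial Laplacian `Δ = Σ_j ∂_j ∂_j` on space-time. -/
def lap2 (f : ℝ × EuclideanSpace ℝ (Fin 2) → F) :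
    ℝ × EuclideanSpace ℝ (Fin 2) → F :=
  fun z => ∑ j : Fin 2, pd j (pd j f) z

/-- Spatial covariant derivative `D_{A,j} f = ∂_j f + i A_j f` on space-time. -/
def cD (A : ℝ × EuclideanSpace ℝ (Fin 2) → Fin 2 → ℝ) (j : Fin 2)
    (f : ℝ × EuclideanSpace ℝ (Fin 2) → ℂ) : ℝ × EuclideanSpace ℝ (Fin 2) → ℂ :=
  fun z => pd j f z + Complex.I * (A z j : ℂ) * f z

/-- Covariant Laplacian `D_A^j D_{A,j}` on space-time. -/
def cLap2 (A : ℝ × EuclideanSpace ℝ (Fin 2) → Fin 2 → ℝ)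
    (f : ℝ × EuclideanSpace ℝ (Fin 2) → ℂ) : ℝ × EuclideanSpace ℝ (Fin 2) → ℂ :=
  fun z => ∑ j : Fin 2, cD A j (cD A j f) z

namespace CMFaux

abbrev E2 := ℝ × EuclideanSpace ℝ (Fin 2)

lemma contDiff_pd {f : E2 → F} (hf : ContDiff ℝ (⊤ : ℕ∞) f) (j : Fin 2) :
    ContDiff ℝ (⊤ : ℕ∞) (pd j f) :=
  (hf.fderiv_right (m := (⊤ : ℕ∞)) (by exact_mod_cast le_top)).clm_apply contDiff_const

lemma fderiv_norm_sq_apply {f : E2 → ℂ} {z : E2} (hf : DifferentiableAt ℝ f z) (v : E2) :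
    fderiv ℝ (fun w => ‖f w‖ ^ 2) z v
      = 2 * ((starRingEnd ℂ) (f z) * fderiv ℝ f z v).re := by
  rw [hf.hasFDerivAt.norm_sq.fderiv]
  simp [Complex.inner]
  ring

lemma fderiv_conj_mul_re {f g : E2 → ℂ} {z : E2} (hf : DifferentiableAt ℝ f z)
    (hg : DifferentiableAt ℝ g z) (v : E2) :
    fderiv ℝ (fun w => ((starRingEnd ℂ) (f w) * g w).re) z v
      = ((starRingEnd ℂ) (fderiv ℝ f z v) * g z).re
        + ((starRingEnd ℂ) (f z) * fderiv ℝ g z v).re := by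
  have h : (fun w => ((starRingEnd ℂ) (f w) * g w).re)
      = fun w => @inner ℝ ℂ _ (f w) (g w) := by
    funext w; rw [Complex.inner, mul_comm]
  rw [h, fderiv_inner_apply ℝ hf hg]
  simp [Complex.inner]
  ring

lemma differentiableAt_conj_mul_re {f g : E2 → ℂ} {z : E2} (hf : DifferentiableAt ℝ f z)
    (hg : DifferentiableAt ℝ g z) :
    DifferentiableAt ℝ (fun w => ((starRingEnd ℂ) (f w) * g w).re) z := by
  have h : (fun w => ((starRingEnd ℂ) (f w) * g w).re)
      = fun w => @inner ℝ ℂ _ (f w) (g w) := by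
    funext w; rw [Complex.inner, mul_comm]
  rw [h]; exact hf.inner ℝ hg

lemma conj_mul_self_re (a : ℂ) : ((starRingEnd ℂ) a * a).re = ‖a‖ ^ 2 := by
  rw [mul_comm, ← Complex.inner, real_inner_self_eq_norm_sq]

lemma fderiv_ofReal_comp {a : E2 → ℝ} {z : E2} (ha : DifferentiableAt ℝ a z) (v : E2) :
    fderiv ℝ (fun w => ((a w : ℝ) : ℂ)) z v = ((fderiv ℝ a z v : ℝ) : ℂ) := by
  have h : HasFDerivAt (fun w => ((a w : ℝ) : ℂ))
      (Complex.ofRealCLM.comp (fderiv ℝ a z)) z :=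
    Complex.ofRealCLM.hasFDerivAt.comp z ha.hasFDerivAt
  rw [h.fderiv]; rfl

lemma C12 (b P1 P2 : ℂ) (α β : ℝ) :
    2 * ((starRingEnd ℂ) b * ((P2 + Complex.I * (β : ℂ) * b + Complex.I * (α : ℂ) * P1)
          + Complex.I * (α : ℂ) * (P1 + Complex.I * (α : ℂ) * b))).re
      + 2 * ‖P1 + Complex.I * (α : ℂ) * b‖ ^ 2
    = 2 * ((starRingEnd ℂ) b * P2).re + 2 * ‖P1‖ ^ 2 := by
  have h : ∀ w : ℂ, ‖w‖ ^ 2 = w.re ^ 2 + w.im ^ 2 := fun w => by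
    rw [Complex.sq_norm, Complex.normSq_apply]; ring
  simp only [h, Complex.add_re, Complex.add_im, Complex.mul_re, Complex.mul_im,
    Complex.I_re, Complex.I_im, Complex.ofReal_re, Complex.ofReal_im,
    Complex.conj_re, Complex.conj_im]
  ring

end CMFaux

/-- **Covariant monotonicity formula (`p`-th power case).** For `p ≥ 2`, if
`(∂_t − D_A^j D_{A,j}) φ = G` on `[0,T] × T²` and `(∂_t + Δ)K = 0`, then at points where
`φ ≠ 0`:
`∂_t(K|φ|^p/p) = −(ΔK)|φ|^p/p + K Δ(|φ|^p/p)
  − K( ((p−2)/4) ||φ|^{(p−4)/2} ∇(|φ|²)|² + |φ|^{p−2}|D_A φ|² − |φ|^{p−2} Re(conj φ · G))`. -/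
theorem covariant_monotonicity_formula_power
    (p : ℝ) (hp : 2 ≤ p)
    (T : ℝ) (hT : 0 < T)
    (A : ℝ × EuclideanSpace ℝ (Fin 2) → Fin 2 → ℝ)
    (φ G : ℝ × EuclideanSpace ℝ (Fin 2) → ℂ)
    (K : ℝ × EuclideanSpace ℝ (Fin 2) → ℝ)
    (hA : ContDiff ℝ (⊤ : ℕ∞) A) (hφ : ContDiff ℝ (⊤ : ℕ∞) φ)
    (hG : ContDiff ℝ (⊤ : ℕ∞) G) (hK : ContDiff ℝ (⊤ : ℕ∞) K)
    (hAper : ∀ (z : ℝ × EuclideanSpace ℝ (Fin 2)) (j k : Fin 2),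
      A (z.1, z.2 + EuclideanSpace.single k (2 * Real.pi)) j = A z j)
    (hφper : ∀ (z : ℝ × EuclideanSpace ℝ (Fin 2)) (k : Fin 2),
      φ (z.1, z.2 + EuclideanSpace.single k (2 * Real.pi)) = φ z)
    (hGper : ∀ (z : ℝ × EuclideanSpace ℝ (Fin 2)) (k : Fin 2),
      G (z.1, z.2 + EuclideanSpace.single k (2 * Real.pi)) = G z)
    (hKper : ∀ (z : ℝ × EuclideanSpace ℝ (Fin 2)) (k : Fin 2),
      K (z.1, z.2 + EuclideanSpace.single k (2 * Real.pi)) = K z)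
    (hheat : ∀ z : ℝ × EuclideanSpace ℝ (Fin 2), z.1 ∈ Set.Icc 0 T →
      td φ z = cLap2 A φ z + G z)
    (hbackK : ∀ z : ℝ × EuclideanSpace ℝ (Fin 2), z.1 ∈ Set.Icc 0 T →
      td K z + lap2 K z = 0)
    (z : ℝ × EuclideanSpace ℝ (Fin 2)) (hz : z.1 ∈ Set.Icc 0 T) (hφz : φ z ≠ 0) :
    td (fun w => K w * ‖φ w‖ ^ p / p) z
      = -(lap2 K z) * (‖φ z‖ ^ p / p) + K z * lap2 (fun w => ‖φ w‖ ^ p / p) z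
        - K z * ((p - 2) / 4 *
              (∑ j : Fin 2, (‖φ z‖ ^ ((p - 4) / 2) * pd j (fun w => ‖φ w‖ ^ 2) z) ^ 2)
            + ‖φ z‖ ^ (p - 2) * (∑ j : Fin 2, ‖cD A j φ z‖ ^ 2)
            - ‖φ z‖ ^ (p - 2) * ((starRingEnd ℂ) (φ z) * G z).re) := by
  classical
  have hp0 : (0:ℝ) < p := lt_of_lt_of_le two_pos hp
  have hle : ((⊤ : ℕ∞) : WithTop ℕ∞) ≠ 0 := by simp
  have hφd : Differentiable ℝ φ := hφ.differentiable hle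
  have hKd : Differentiable ℝ K := hK.differentiable hle
  have hGd : Differentiable ℝ G := hG.differentiable hle
  set u : ℝ × EuclideanSpace ℝ (Fin 2) → ℝ := fun w => ‖φ w‖ ^ 2 with hu_def
  have hu : ContDiff ℝ (⊤ : ℕ∞) u := hφ.norm_sq (𝕜 := ℂ)
  have hud : Differentiable ℝ u := hu.differentiable hle
  have hψ : ∀ j, ContDiff ℝ (⊤ : ℕ∞) (pd j φ) := fun j => CMFaux.contDiff_pd hφ j
  have hψd : ∀ j, Differentiable ℝ (pd j φ) := fun j => (hψ j).differentiable hle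
  have hupd : ∀ j, Differentiable ℝ (pd j u) :=
    fun j => (CMFaux.contDiff_pd hu j).differentiable hle
  -- first derivatives of u
  have du : ∀ (w : ℝ × EuclideanSpace ℝ (Fin 2)) (v : ℝ × EuclideanSpace ℝ (Fin 2)),
      fderiv ℝ u w v = 2 * ((starRingEnd ℂ) (φ w) * fderiv ℝ φ w v).re :=
    fun w v => CMFaux.fderiv_norm_sq_apply (hφd w) v
  have pdu : ∀ (j : Fin 2) w, pd j u w = 2 * ((starRingEnd ℂ) (φ w) * pd j φ w).re :=
    fun j w => du w _
  have tdu0 : td u z = 2 * ((starRingEnd ℂ) (φ z) * td φ z).re := du z _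
  -- second derivatives of u
  have hW : ∀ j : Fin 2, pd j (pd j u) z
      = 2 * ‖pd j φ z‖ ^ 2 + 2 * ((starRingEnd ℂ) (φ z) * pd j (pd j φ) z).re := by
    intro j
    have he : pd j u = fun w => 2 * ((starRingEnd ℂ) (φ w) * pd j φ w).re := funext (pdu j)
    have h1 : pd j (pd j u) z
        = fderiv ℝ (fun w => 2 * ((starRingEnd ℂ) (φ w) * pd j φ w).re) z
            (0, EuclideanSpace.single j 1) := by
      rw [pd, he]
    rw [h1, fderiv_const_mul (CMFaux.differentiableAt_conj_mul_re (hφd z) (hψd j z)) 2]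
    rw [ContinuousLinearMap.smul_apply, smul_eq_mul,
      CMFaux.fderiv_conj_mul_re (hφd z) (hψd j z)]
    rw [show fderiv ℝ φ z (0, EuclideanSpace.single j 1) = pd j φ z from rfl,
      CMFaux.conj_mul_self_re]
    rw [show fderiv ℝ (pd j φ) z (0, EuclideanSpace.single j 1) = pd j (pd j φ) z from rfl]
    ring
  -- covariant derivative expansion
  have haj : ∀ j : Fin 2, ContDiff ℝ (⊤ : ℕ∞) (fun w => A w j) := fun j => contDiff_pi.mp hA j
  have hajd : ∀ j : Fin 2, Differentiable ℝ (fun w => A w j) :=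
    fun j => (haj j).differentiable hle
  have hajC : ∀ j : Fin 2, Differentiable ℝ (fun w => ((A w j : ℝ) : ℂ)) :=
    fun j => Complex.ofRealCLM.differentiable.comp (hajd j)
  have hcD : ∀ j : Fin 2, pd j (cD A j φ) z
      = pd j (pd j φ) z + Complex.I * ((pd j (fun w => A w j) z : ℝ) : ℂ) * φ z
        + Complex.I * ((A z j : ℝ) : ℂ) * pd j φ z := by
    intro j
    have hfun : cD A j φ = fun w => pd j φ w + Complex.I * (((A w j : ℝ) : ℂ) * φ w) := by
      funext w; rw [cD]; ring
    have hd2 : DifferentiableAt ℝ (fun w => (((A w j : ℝ) : ℂ) * φ w)) z :=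
      (hajC j z).mul (hφd z)
    have h1 : pd j (cD A j φ) z
        = fderiv ℝ (fun w => pd j φ w + Complex.I * (((A w j : ℝ) : ℂ) * φ w)) z
            (0, EuclideanSpace.single j 1) := by rw [pd, hfun]
    rw [h1, fderiv_fun_add (hψd j z) (hd2.const_mul _), ContinuousLinearMap.add_apply,
      fderiv_const_mul hd2 Complex.I, ContinuousLinearMap.smul_apply,
      fderiv_fun_mul (hajC j z) (hφd z), ContinuousLinearMap.add_apply,
      ContinuousLinearMap.smul_apply, ContinuousLinearMap.smul_apply,
      CMFaux.fderiv_ofReal_comp (hajd j z)]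
    rw [show fderiv ℝ φ z (0, EuclideanSpace.single j 1) = pd j φ z from rfl,
      show fderiv ℝ (pd j φ) z (0, EuclideanSpace.single j 1) = pd j (pd j φ) z from rfl,
      show fderiv ℝ (fun w => A w j) z (0, EuclideanSpace.single j 1)
        = pd j (fun w => A w j) z from rfl]
    simp only [smul_eq_mul]
    ring
  -- key pointwise identity
  have key : ∀ j : Fin 2, 2 * ((starRingEnd ℂ) (φ z) * cD A j (cD A j φ) z).re
      = pd j (pd j u) z - 2 * ‖cD A j φ z‖ ^ 2 := by
    intro j
    have e1 : cD A j (cD A j φ) z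
        = (pd j (pd j φ) z + Complex.I * ((pd j (fun w => A w j) z : ℝ) : ℂ) * φ z
            + Complex.I * ((A z j : ℝ) : ℂ) * pd j φ z)
          + Complex.I * ((A z j : ℝ) : ℂ)
            * (pd j φ z + Complex.I * ((A z j : ℝ) : ℂ) * φ z) := by
      show pd j (cD A j φ) z + Complex.I * ((A z j : ℝ) : ℂ) * cD A j φ z = _
      rw [hcD j]
      rfl
    have e2 : cD A j φ z = pd j φ z + Complex.I * ((A z j : ℝ) : ℂ) * φ z := rfl
    have hc := CMFaux.C12 (φ z) (pd j φ z) (pd j (pd j φ) z) (A z j)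
      (pd j (fun w => A w j) z)
    rw [e1, e2, hW j]
    linarith [hc]
  -- time derivative of u via the PDE
  have h_tdu : td u z = (∑ j : Fin 2, pd j (pd j u) z)
      - 2 * (∑ j : Fin 2, ‖cD A j φ z‖ ^ 2) + 2 * ((starRingEnd ℂ) (φ z) * G z).re := by
    rw [tdu0, hheat z hz]
    have hsum : cLap2 A φ z = cD A 0 (cD A 0 φ) z + cD A 1 (cD A 1 φ) z := by
      rw [cLap2, Fin.sum_univ_two]
    rw [hsum, Fin.sum_univ_two, Fin.sum_univ_two]
    have k0 := key 0
    have k1 := key 1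
    have expand : (starRingEnd ℂ) (φ z)
        * (cD A 0 (cD A 0 φ) z + cD A 1 (cD A 1 φ) z + G z)
      = (starRingEnd ℂ) (φ z) * cD A 0 (cD A 0 φ) z
        + (starRingEnd ℂ) (φ z) * cD A 1 (cD A 1 φ) z
        + (starRingEnd ℂ) (φ z) * G z := by ring
    rw [expand, Complex.add_re, Complex.add_re]
    linarith [k0, k1]
  -- scalar rpow facts
  have hnz : ‖φ z‖ ≠ 0 := norm_ne_zero_iff.mpr hφz
  have hx : (0:ℝ) ≤ ‖φ z‖ := norm_nonneg _
  have hu0 : u z ≠ 0 := pow_ne_zero 2 hnz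
  have hrp : ∀ w, ‖φ w‖ ^ p = u w ^ (p/2) := by
    intro w
    have h2 : ((2:ℕ) : ℝ) * (p/2) = p := by push_cast; ring
    rw [show u w = ‖φ w‖ ^ 2 from rfl, ← Real.rpow_natCast ‖φ w‖ 2,
      ← Real.rpow_mul (norm_nonneg _), h2]
  have e1 : u z ^ (p/2 - 1) = ‖φ z‖ ^ (p - 2) := by
    have h2 : ((2:ℕ) : ℝ) * (p/2 - 1) = p - 2 := by push_cast; ring
    rw [show u z = ‖φ z‖ ^ 2 from rfl, ← Real.rpow_natCast ‖φ z‖ 2,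
      ← Real.rpow_mul hx, h2]
  have e2 : u z ^ (p/2 - 2) = ‖φ z‖ ^ (p - 4) := by
    have h2 : ((2:ℕ) : ℝ) * (p/2 - 2) = p - 4 := by push_cast; ring
    rw [show u z = ‖φ z‖ ^ 2 from rfl, ← Real.rpow_natCast ‖φ z‖ 2,
      ← Real.rpow_mul hx, h2]
  have e3 : (‖φ z‖ ^ ((p - 4)/2)) ^ (2:ℕ) = u z ^ (p/2 - 2) := by
    have h2 : (p - 4)/2 * ((2:ℕ) : ℝ) = p - 4 := by push_cast; ring
    rw [e2, ← Real.rpow_natCast (‖φ z‖ ^ ((p - 4)/2)) 2, ← Real.rpow_mul hx, h2]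
  -- the rpow composite and its derivative at z
  have hrpow : HasFDerivAt (fun w => u w ^ (p/2))
      ((p/2 * u z ^ (p/2 - 1)) • fderiv ℝ u z) z :=
    (hud z).hasFDerivAt.rpow_const (Or.inl hu0)
  -- LHS: time derivative of K * ‖φ‖^p / p
  have htd_goal : td (fun w => K w * ‖φ w‖ ^ p / p) z
      = (u z ^ (p/2) * fderiv ℝ K z (1,0)
          + K z * (p/2 * u z ^ (p/2 - 1) * td u z)) / p := by
    have hgfun : (fun w => K w * ‖φ w‖ ^ p / p) = fun w => p⁻¹ * (K w * u w ^ (p/2)) :=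
      funext fun w => by rw [hrp w]; ring
    have hK' : HasFDerivAt K (fderiv ℝ K z) z := (hKd z).hasFDerivAt
    have hprod := (hK'.mul hrpow).const_mul p⁻¹
    have h1 : td (fun w => K w * ‖φ w‖ ^ p / p) z
        = fderiv ℝ (fun w => p⁻¹ * (K w * u w ^ (p/2))) z (1,0) := by rw [td, hgfun]
    rw [h1, show (fun w => p⁻¹ * (K w * u w ^ (p/2)))
      = (fun y => p⁻¹ * (K * fun w => u w ^ (p / 2)) y) from rfl, hprod.fderiv]
    simp only [ContinuousLinearMap.coe_smul', Pi.smul_apply, ContinuousLinearMap.add_apply,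
      ContinuousLinearMap.smul_apply, smul_eq_mul]
    rw [show fderiv ℝ u z (1,0) = td u z from rfl]
    field_simp
    ring
  -- second spatial derivatives of ‖φ‖^p / p
  have hS : IsOpen {w : ℝ × EuclideanSpace ℝ (Fin 2) | φ w ≠ 0} :=
    isOpen_compl_singleton.preimage (hφ.continuous)
  have hlapj : ∀ j : Fin 2, pd j (pd j (fun w => ‖φ w‖ ^ p / p)) z
      = p⁻¹ * (p/2) * (u z ^ (p/2 - 1) * pd j (pd j u) z
          + (p/2 - 1) * u z ^ (p/2 - 2) * pd j u z * pd j u z) := by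
    intro j
    have hpdg : ∀ w : ℝ × EuclideanSpace ℝ (Fin 2), φ w ≠ 0 →
        pd j (fun w => ‖φ w‖ ^ p / p) w
          = p⁻¹ * (p/2) * (u w ^ (p/2 - 1) * pd j u w) := by
      intro w hw
      have hu0w : u w ≠ 0 := pow_ne_zero 2 (norm_ne_zero_iff.mpr hw)
      have hgfun : (fun w => ‖φ w‖ ^ p / p) = fun w => p⁻¹ * u w ^ (p/2) :=
        funext fun w => by rw [hrp w]; ring
      have hder : HasFDerivAt (fun w => p⁻¹ * u w ^ (p/2))
          (p⁻¹ • ((p/2 * u w ^ (p/2 - 1)) • fderiv ℝ u w)) w :=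
        ((hud w).hasFDerivAt.rpow_const (Or.inl hu0w)).const_mul p⁻¹
      have h1 : pd j (fun w => ‖φ w‖ ^ p / p) w
          = fderiv ℝ (fun w => p⁻¹ * u w ^ (p/2)) w (0, EuclideanSpace.single j 1) := by
        rw [pd, hgfun]
      rw [h1, hder.fderiv]
      simp only [ContinuousLinearMap.coe_smul', Pi.smul_apply, smul_eq_mul]
      rw [show fderiv ℝ u w (0, EuclideanSpace.single j 1) = pd j u w from rfl]
      ring
    have hev : (pd j (fun w => ‖φ w‖ ^ p / p))
        =ᶠ[nhds z] fun w => p⁻¹ * (p/2) * (u w ^ (p/2 - 1) * pd j u w) := by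
      filter_upwards [hS.mem_nhds hφz] with w hw
      exact hpdg w hw
    have h2 : pd j (pd j (fun w => ‖φ w‖ ^ p / p)) z
        = fderiv ℝ (fun w => p⁻¹ * (p/2) * (u w ^ (p/2 - 1) * pd j u w)) z
            (0, EuclideanSpace.single j 1) := by
      rw [pd, hev.fderiv_eq]
    have hr1 : HasFDerivAt (fun w => u w ^ (p/2 - 1))
        (((p/2 - 1) * u z ^ (p/2 - 1 - 1)) • fderiv ℝ u z) z :=
      (hud z).hasFDerivAt.rpow_const (Or.inl hu0)
    have hder2 : HasFDerivAt (fun w => p⁻¹ * (p/2) * (u w ^ (p/2 - 1) * pd j u w))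
        ((p⁻¹ * (p/2)) • ((u z ^ (p/2 - 1)) • fderiv ℝ (pd j u) z
          + (pd j u z) • (((p/2 - 1) * u z ^ (p/2 - 1 - 1)) • fderiv ℝ u z))) z :=
      (hr1.mul (hupd j z).hasFDerivAt).const_mul _
    rw [h2, hder2.fderiv]
    simp only [ContinuousLinearMap.coe_smul', Pi.smul_apply, ContinuousLinearMap.add_apply,
      ContinuousLinearMap.smul_apply, smul_eq_mul]
    rw [show fderiv ℝ u z (0, EuclideanSpace.single j 1) = pd j u z from rfl,
      show fderiv ℝ (pd j u) z (0, EuclideanSpace.single j 1) = pd j (pd j u) z from rfl,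
      show p/2 - 1 - 1 = p/2 - 2 by ring]
    ring
  -- assemble everything
  have hKt : td K z = - lap2 K z := by have h := hbackK z hz; linarith
  have hlap : lap2 (fun w => ‖φ w‖ ^ p / p) z
      = p⁻¹ * (p/2) * (u z ^ (p/2 - 1) * pd 0 (pd 0 u) z
          + (p/2 - 1) * u z ^ (p/2 - 2) * pd 0 u z * pd 0 u z)
        + p⁻¹ * (p/2) * (u z ^ (p/2 - 1) * pd 1 (pd 1 u) z
          + (p/2 - 1) * u z ^ (p/2 - 2) * pd 1 u z * pd 1 u z) := by
    rw [lap2, Fin.sum_univ_two, hlapj 0, hlapj 1]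
  have hKt' : fderiv ℝ K z (1,0) = - lap2 K z := by
    rw [show fderiv ℝ K z (1,0) = td K z from rfl]; exact hKt
  rw [htd_goal, hKt', h_tdu, hlap, hrp z, ← e1]
  simp only [Fin.sum_univ_two, mul_pow, e3]
  field_simp
  ring
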